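/- Given a feasible P ∈ M(μ₁,…,μ_k) and alternative marginals μ'₁,…,μ'_k ∈ Δ_n, there exists P̂ ∈ M(μ'₁,…,μ'_k) with entrywise ℓ₁ distance ‖P̂ − P‖₁ ≤ 2 Σ_{i=1}^k ‖μ_i − μ'_i‖₁. -/

import Mathlib

open Finset

noncomputable def marg {n k : ℕ} (P : (Fin k → Fin n) → ℝ) (i : Fin k) (j : Fin n) : ℝ :=
  ∑ x : Fin k → Fin n, if x i = j then P x else 0

def simplex {n : ℕ} (μ : Fin n → ℝ) : Prop :=
  (∀ j, 0 ≤ μ j) ∧ ∑ j, μ j = 1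

noncomputable def transport {n k : ℕ} (μ : Fin k → Fin n → ℝ) : Set ((Fin k → Fin n) → ℝ) :=
  {P | (∀ x, 0 ≤ P x) ∧ ∀ i j, marg P i j = μ i j}

noncomputable def dotT {n k : ℕ} (P C : (Fin k → Fin n) → ℝ) : ℝ :=
  ∑ x : Fin k → Fin n, P x * C x

noncomputable def MOT {n k : ℕ} (C : (Fin k → Fin n) → ℝ) (μ : Fin k → Fin n → ℝ) : ℝ :=
  sInf ((fun P => dotT P C) '' transport μ)

noncomputable def MINC {n k : ℕ} (C : (Fin k → Fin n) → ℝ) (p : Fin k → Fin n → ℝ) : ℝ :=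
  ⨅ x : Fin k → Fin n, (C x - ∑ i, p i (x i))


lemma piSumProd {n k : ℕ} (g : Fin k → Fin n → ℝ) :
    ∑ x : Fin k → Fin n, ∏ l, g l (x l) = ∏ l, ∑ j, g l j := by
  rw [Finset.prod_univ_sum, Fintype.piFinset_univ]

lemma fiberSumProd {n k : ℕ} (g : Fin k → Fin n → ℝ) (i : Fin k) (j : Fin n) :
    (∑ x : Fin k → Fin n, if x i = j then ∏ l, g l (x l) else 0)
      = g i j * ∏ l ∈ univ.erase i, ∑ j', g l j' := by
  have h1 : ∀ x : Fin k → Fin n,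
      (if x i = j then ∏ l, g l (x l) else 0)
        = ∏ l, (fun l j' => if l = i then (if j' = j then g l j' else 0) else g l j') l (x l) := by
    intro x
    by_cases h : x i = j
    · rw [if_pos h]
      refine Finset.prod_congr rfl fun l _ => ?_
      by_cases hl : l = i
      · subst hl; simp [h]
      · simp [hl]
    · rw [if_neg h]
      symm
      exact Finset.prod_eq_zero (Finset.mem_univ i) (by simp [h])
  simp_rw [h1]
  have h2 := piSumProd (fun l j' => if l = i then (if j' = j then g l j' else 0) else g l j')
  rw [h2]
  rw [← Finset.mul_prod_erase univ _ (mem_univ i)]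
  congr 1
  · simp
  · refine Finset.prod_congr rfl fun l hl => ?_
    have : l ≠ i := Finset.ne_of_mem_erase hl
    simp [this]

lemma sumFibers {n k : ℕ} (l : Fin k) (h : (Fin k → Fin n) → ℝ) :
    ∑ x : Fin k → Fin n, h x = ∑ j, ∑ x : Fin k → Fin n, if x l = j then h x else 0 := by
  rw [Finset.sum_comm]
  refine Finset.sum_congr rfl fun x _ => ?_
  simp

lemma oneSubProd {ι : Type*} (s : Finset ι) (a : ι → ℝ) (h0 : ∀ i ∈ s, 0 ≤ a i)
    (h1 : ∀ i ∈ s, a i ≤ 1) : 1 - ∏ i ∈ s, a i ≤ ∑ i ∈ s, (1 - a i) := by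
  classical
  induction s using Finset.induction_on with
  | empty => simp
  | insert _ _ hni ih =>
    rename_i i s
    rw [Finset.prod_insert hni, Finset.sum_insert hni]
    have hprod1 : ∏ x ∈ s, a x ≤ 1 :=
      Finset.prod_le_one (fun x hx => h0 x (mem_insert_of_mem hx))
        (fun x hx => h1 x (mem_insert_of_mem hx))
    have hai0 : 0 ≤ a i := h0 i (mem_insert_self i s)
    have hai1 : a i ≤ 1 := h1 i (mem_insert_self i s)
    have := ih (fun x hx => h0 x (mem_insert_of_mem hx)) (fun x hx => h1 x (mem_insert_of_mem hx))
    nlinarith [Finset.prod_le_one (s := s) (fun x hx => h0 x (mem_insert_of_mem hx)) (fun x hx => h1 x (mem_insert_of_mem hx))]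

/-- rounding a feasible tensor to new marginals with ℓ₁ error
at most 2 Σᵢ ‖μᵢ − μ'ᵢ‖₁. -/
theorem stmt_5 {n k : ℕ} (μ μ' : Fin k → Fin n → ℝ)
    (hμ : ∀ i, simplex (μ i)) (hμ' : ∀ i, simplex (μ' i))
    (P : (Fin k → Fin n) → ℝ) (hP : P ∈ transport μ) :
    ∃ Q ∈ transport μ',
      ∑ x : Fin k → Fin n, |Q x - P x| ≤ 2 * ∑ i, ∑ j, |μ i j - μ' i j| := by
  classical
  obtain ⟨hPnn, hPm⟩ := hP
  rcases Nat.eq_zero_or_pos k with hk | hk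
  · subst hk
    refine ⟨P, ⟨hPnn, fun i => i.elim0⟩, by simp⟩
  have i0 : Fin k := ⟨0, hk⟩
  rcases Nat.eq_zero_or_pos n with hn | hn
  · exfalso
    have := (hμ i0).2
    subst hn
    simp at this
  -- definitions
  set α : Fin k → Fin n → ℝ := fun i j => min 1 (μ' i j / μ i j) with hαdef
  set P1 : (Fin k → Fin n) → ℝ := fun x => P x * ∏ i, α i (x i) with hP1def
  set m : Fin k → Fin n → ℝ := fun i j => marg P1 i j with hmdef
  set s : ℝ := 1 - ∑ x, P1 x with hsdef
  -- basic facts about α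
  have hα0 : ∀ i j, 0 ≤ α i j := by
    intro i j
    exact le_min zero_le_one (div_nonneg ((hμ' i).1 j) ((hμ i).1 j)) |>.trans_eq rfl
  have hα1 : ∀ i j, α i j ≤ 1 := fun i j => min_le_left _ _
  have hαμ : ∀ i j, α i j * μ i j ≤ μ' i j := by
    intro i j
    rcases eq_or_lt_of_le ((hμ i).1 j) with h | h
    · rw [← h, mul_zero]; exact (hμ' i).1 j
    · calc α i j * μ i j ≤ (μ' i j / μ i j) * μ i j := by
            exact mul_le_mul_of_nonneg_right (min_le_right _ _) h.le
        _ = μ' i j := div_mul_cancel₀ _ h.ne'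
  -- facts about P1
  have hP1nn : ∀ x, 0 ≤ P1 x := fun x =>
    mul_nonneg (hPnn x) (Finset.prod_nonneg fun i _ => hα0 i (x i))
  have hP1le : ∀ x, P1 x ≤ P x := by
    intro x
    have : ∏ i, α i (x i) ≤ 1 :=
      Finset.prod_le_one (fun i _ => hα0 i (x i)) (fun i _ => hα1 i (x i))
    simpa [hP1def] using mul_le_of_le_one_right (hPnn x) this
  have hprod_le : ∀ (i : Fin k) (x : Fin k → Fin n), ∏ l, α l (x l) ≤ α i (x i) := by
    intro i x
    rw [← Finset.mul_prod_erase univ _ (mem_univ i)]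
    refine mul_le_of_le_one_right (hα0 i (x i)) ?_
    exact Finset.prod_le_one (fun l _ => hα0 l (x l)) (fun l _ => hα1 l (x l))
  -- marginal bounds for P1
  have hmnn : ∀ i j, 0 ≤ m i j := by
    intro i j
    refine Finset.sum_nonneg fun x _ => ?_
    split_ifs
    · exact hP1nn x
    · exact le_refl 0
  have hmle : ∀ i j, m i j ≤ μ' i j := by
    intro i j
    have step1 : m i j ≤ α i j * μ i j := by
      rw [← hPm i j]
      show (∑ x : Fin k → Fin n, if x i = j then P1 x else 0)
        ≤ α i j * ∑ x : Fin k → Fin n, if x i = j then P x else 0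
      rw [Finset.mul_sum]
      refine Finset.sum_le_sum fun x _ => ?_
      split_ifs with h
      · calc P x * ∏ l, α l (x l) ≤ P x * α i (x i) :=
              mul_le_mul_of_nonneg_left (hprod_le i x) (hPnn x)
          _ = α i j * P x := by rw [h]; ring
      · simp
    exact step1.trans (hαμ i j)
  -- total masses
  have hsumfib : ∀ (T : (Fin k → Fin n) → ℝ) (i : Fin k), ∑ j, marg T i j = ∑ x, T x := by
    intro T i
    rw [sumFibers i T]
    rfl
  have hPtot : ∑ x, P x = 1 := by
    rw [← hsumfib P i0]
    have : ∀ j, marg P i0 j = μ i0 j := hPm i0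
    simp_rw [this]
    exact (hμ i0).2
  have hstot : ∀ i : Fin k, ∑ j, (μ' i j - m i j) = s := by
    intro i
    rw [Finset.sum_sub_distrib, (hμ' i).2, hmdef]
    show 1 - ∑ j, marg P1 i j = s
    rw [hsumfib P1 i]
  have hsnn : 0 ≤ s := by
    rw [← hstot i0]
    exact Finset.sum_nonneg fun j _ => sub_nonneg.2 (hmle i0 j)
  -- the rounded tensor
  set Q : (Fin k → Fin n) → ℝ :=
    fun x => P1 x + (∏ l, (μ' l (x l) - m l (x l))) / s ^ (k - 1) with hQdef
  have hcnn : ∀ x : Fin k → Fin n, 0 ≤ (∏ l, (μ' l (x l) - m l (x l))) / s ^ (k - 1) := by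
    intro x
    exact div_nonneg (Finset.prod_nonneg fun l _ => sub_nonneg.2 (hmle l (x l)))
      (pow_nonneg hsnn _)
  have herase_card : ∀ i : Fin k, (univ.erase i).card = k - 1 := by
    intro i
    rw [Finset.card_erase_of_mem (mem_univ i), Finset.card_univ, Fintype.card_fin]
  -- marginal of the correction term
  have hcorr_marg : ∀ (i : Fin k) (j : Fin n),
      (∑ x : Fin k → Fin n, if x i = j then ∏ l, (μ' l (x l) - m l (x l)) else 0)
        = (μ' i j - m i j) * s ^ (k - 1) := by
    intro i j
    rw [fiberSumProd (fun l j' => μ' l j' - m l j') i j]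
    congr 1
    calc (∏ l ∈ univ.erase i, ∑ j', (μ' l j' - m l j'))
        = ∏ l ∈ univ.erase i, s := Finset.prod_congr rfl fun l _ => hstot l
      _ = s ^ (k - 1) := by rw [Finset.prod_const, herase_card i]
  -- total of the correction numerator
  have hcorr_tot : (∑ x : Fin k → Fin n, ∏ l, (μ' l (x l) - m l (x l))) = s ^ k := by
    rw [piSumProd (fun l j' => μ' l j' - m l j')]
    calc (∏ l : Fin k, ∑ j', (μ' l j' - m l j'))
        = ∏ l : Fin k, s := Finset.prod_congr rfl fun l _ => hstot l
      _ = s ^ k := by rw [Finset.prod_const, Finset.card_univ, Fintype.card_fin]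
  have hk1 : k - 1 + 1 = k := Nat.succ_pred_eq_of_pos hk
  -- s = 0 implies m = μ'
  have hs0 : s = 0 → ∀ i j, μ' i j - m i j = 0 := by
    intro h0 i j
    have := hstot i
    rw [h0] at this
    exact (Finset.sum_eq_zero_iff_of_nonneg
      (fun j _ => sub_nonneg.2 (hmle i j))).1 this j (mem_univ j)
  -- Q has the right marginals
  have hQmarg : ∀ i j, marg Q i j = μ' i j := by
    intro i j
    show (∑ x : Fin k → Fin n, if x i = j then Q x else 0) = μ' i j
    have hsplit : ∀ x : Fin k → Fin n, (if x i = j then Q x else 0)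
        = (if x i = j then P1 x else 0)
          + (if x i = j then ∏ l, (μ' l (x l) - m l (x l)) else 0) / s ^ (k - 1) := by
      intro x
      split_ifs <;> simp [hQdef]
    simp_rw [hsplit]
    rw [Finset.sum_add_distrib, ← Finset.sum_div, hcorr_marg i j]
    show m i j + (μ' i j - m i j) * s ^ (k - 1) / s ^ (k - 1) = μ' i j
    by_cases h0 : s = 0
    · rw [hs0 h0 i j]
      have := hs0 h0 i j
      simp
      linarith
    · rw [mul_div_assoc, div_self (pow_ne_zero _ h0), mul_one]
      ring
  -- sum of correction terms
  have hcorr_sum : (∑ x : Fin k → Fin n, (∏ l, (μ' l (x l) - m l (x l))) / s ^ (k - 1)) = s := by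
    rw [← Finset.sum_div, hcorr_tot]
    by_cases h0 : s = 0
    · rw [h0, zero_pow (by omega), zero_div]
    · have hpw : s ^ k = s ^ (k - 1) * s := by rw [← pow_succ, hk1]
      rw [hpw, mul_div_cancel_left₀ _ (pow_ne_zero _ h0)]
  -- ℓ₁ distance bound: ≤ 2s
  have hl1 : ∑ x : Fin k → Fin n, |Q x - P x| ≤ 2 * s := by
    have hterm : ∀ x : Fin k → Fin n, |Q x - P x|
        ≤ (P x - P1 x) + (∏ l, (μ' l (x l) - m l (x l))) / s ^ (k - 1) := by
      intro x
      have h1 : Q x - P x = (P1 x - P x) + (∏ l, (μ' l (x l) - m l (x l))) / s ^ (k - 1) := by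
        simp [hQdef]; ring
      rw [h1]
      calc |(P1 x - P x) + (∏ l, (μ' l (x l) - m l (x l))) / s ^ (k - 1)|
          ≤ |P1 x - P x| + |(∏ l, (μ' l (x l) - m l (x l))) / s ^ (k - 1)| := abs_add_le _ _
        _ = (P x - P1 x) + (∏ l, (μ' l (x l) - m l (x l))) / s ^ (k - 1) := by
            rw [abs_of_nonpos (by linarith [hP1le x]), abs_of_nonneg (hcnn x)]
            ring
    calc ∑ x : Fin k → Fin n, |Q x - P x|
        ≤ ∑ x : Fin k → Fin n, ((P x - P1 x) + (∏ l, (μ' l (x l) - m l (x l))) / s ^ (k - 1)) :=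
          Finset.sum_le_sum fun x _ => hterm x
      _ = (∑ x, P x - ∑ x, P1 x) + s := by rw [Finset.sum_add_distrib, Finset.sum_sub_distrib, hcorr_sum]
      _ = 2 * s := by rw [hPtot]; rw [hsdef]; ring
  -- bound s by marginal discrepancies
  have hsbound : s ≤ ∑ i, ∑ j, |μ i j - μ' i j| := by
    have key : ∀ x : Fin k → Fin n, P x - P1 x ≤ ∑ l, (P x - P x * α l (x l)) := by
      intro x
      have h1 : 1 - ∏ l, α l (x l) ≤ ∑ l, (1 - α l (x l)) :=
        oneSubProd univ (fun l => α l (x l)) (fun l _ => hα0 l (x l)) (fun l _ => hα1 l (x l))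
      have h2 : P x - P1 x = P x * (1 - ∏ l, α l (x l)) := by simp [hP1def]; ring
      have h3 : ∑ l, (P x - P x * α l (x l)) = P x * ∑ l, (1 - α l (x l)) := by
        rw [Finset.mul_sum]
        exact Finset.sum_congr rfl fun l _ => by ring
      rw [h2, h3]
      exact mul_le_mul_of_nonneg_left h1 (hPnn x)
    have hPα : ∀ l : Fin k, ∑ x, P x * α l (x l) = ∑ j, α l j * μ l j := by
      intro l
      rw [sumFibers l (fun x => P x * α l (x l))]
      refine Finset.sum_congr rfl fun j _ => ?_
      rw [← hPm l j]
      show (∑ x : Fin k → Fin n, if x l = j then P x * α l (x l) else 0)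
        = α l j * ∑ x : Fin k → Fin n, if x l = j then P x else 0
      rw [Finset.mul_sum]
      refine Finset.sum_congr rfl fun x _ => ?_
      split_ifs with h
      · rw [h]; ring
      · simp
    have hterm2 : ∀ (l : Fin k) (j : Fin n), μ l j - α l j * μ l j ≤ |μ l j - μ' l j| := by
      intro l j
      rcases eq_or_lt_of_le ((hμ l).1 j) with h | h
      · rw [← h]; simp
      · rcases min_cases 1 (μ' l j / μ l j) with ⟨he, hle⟩ | ⟨he, hle⟩
        · show μ l j - min 1 (μ' l j / μ l j) * μ l j ≤ _
          rw [he, one_mul, sub_self]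
          exact abs_nonneg _
        · show μ l j - min 1 (μ' l j / μ l j) * μ l j ≤ _
          rw [he, div_mul_cancel₀ _ h.ne']
          exact le_abs_self _
    calc s = ∑ x, P x - ∑ x, P1 x := by rw [hPtot, hsdef]
      _ = ∑ x, (P x - P1 x) := (Finset.sum_sub_distrib _ _).symm
      _ ≤ ∑ x, ∑ l, (P x - P x * α l (x l)) := Finset.sum_le_sum fun x _ => key x
      _ = ∑ l, ∑ x, (P x - P x * α l (x l)) := Finset.sum_comm
      _ = ∑ l : Fin k, (1 - ∑ j, α l j * μ l j) := by
          refine Finset.sum_congr rfl fun l _ => ?_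
          rw [Finset.sum_sub_distrib, hPtot, hPα l]
      _ = ∑ l : Fin k, ∑ j, (μ l j - α l j * μ l j) := by
          refine Finset.sum_congr rfl fun l _ => ?_
          rw [Finset.sum_sub_distrib, (hμ l).2]
      _ ≤ ∑ l, ∑ j, |μ l j - μ' l j| :=
          Finset.sum_le_sum fun l _ => Finset.sum_le_sum fun j _ => hterm2 l j
  refine ⟨Q, ⟨fun x => add_nonneg (hP1nn x) (hcnn x), hQmarg⟩, ?_⟩
  calc ∑ x : Fin k → Fin n, |Q x - P x| ≤ 2 * s := hl1
    _ ≤ 2 * ∑ i, ∑ j, |μ i j - μ' i j| := by linarith [hsbound]
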